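/- Fix i ∈ {1,…,N} and fix the coordinates b_j for all j ≠ i of a strictly ordered bid profile. Then the map t ↦ W_i evaluated at the profile with b_i replaced by t, with all waiting times W_k recomputed from the perturbed profile, is monotone decreasing in t on the interval (b_{i−1}, b_{i+1}), where b_0 := 0 and b_{N+1} := ∞. -/

import Mathlib

/-- Class expected waiting times `W_i` in the accumulating-priority M/G/1 queue
with class loads `ρ`, strictly ordered bid profile `b` and mean residual
service time `W0`, defined by Kleinrock's recursion
`W_i = (W₀/(1−ρ) − Σ_{k<i} ρ_k(1 − b_k/b_i)W_k) / (1 − Σ_{k≥i} ρ_k(1 − b_i/b_k))`. -/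
noncomputable def classW {N : ℕ} (ρ b : Fin N → ℝ) (W0 : ℝ) : Fin N → ℝ
  | i =>
    (W0 / (1 - ∑ k, ρ k)
      - ∑ k : Fin N, if h : k < i then ρ k * (1 - b k / b i) * classW ρ b W0 k else 0)
    / (1 - ∑ k : Fin N, if i ≤ k then ρ k * (1 - b i / b k) else 0)
  termination_by i => i.val
  decreasing_by exact h

noncomputable def dd {N : ℕ} (ρ c : Fin N → ℝ) (j : Fin N) : ℝ :=
  1 - ∑ k, if j ≤ k then ρ k * (1 - c j / c k) else 0

lemma classW_eq {N : ℕ} (ρ c : Fin N → ℝ) (W0 : ℝ) (j : Fin N) :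
    classW ρ c W0 j = (W0 / (1 - ∑ k, ρ k)
      - ∑ k, if k < j then ρ k * (1 - c k / c j) * classW ρ c W0 k else 0) / dd ρ c j := by
  rw [classW, dd]
  simp only [dite_eq_ite]

lemma sum_lt_zero {N : ℕ} (f : Fin N → ℝ) (h0 : 0 < N) :
    ∑ l, (if l < (⟨0, h0⟩ : Fin N) then f l else 0) = 0 := by
  apply Finset.sum_eq_zero
  intro l _
  rw [if_neg]
  simp [Fin.lt_def]

lemma sum_lt_succ {N : ℕ} (f : Fin N → ℝ) (n : ℕ) (hn' : n < N) (hn : n + 1 < N) :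
    ∑ l, (if l < (⟨n + 1, hn⟩ : Fin N) then f l else 0)
      = (∑ l, if l < (⟨n, hn'⟩ : Fin N) then f l else 0) + f ⟨n, hn'⟩ := by
  have key : ∀ l : Fin N, (if l < (⟨n + 1, hn⟩ : Fin N) then f l else 0)
      = (if l < (⟨n, hn'⟩ : Fin N) then f l else 0) + (if l = ⟨n, hn'⟩ then f l else 0) := by
    intro l
    simp only [Fin.lt_def, Fin.ext_iff]
    split_ifs <;> (first | ring1 | (exfalso; omega))
  rw [Finset.sum_congr rfl (fun l _ => key l), Finset.sum_add_distrib,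
    Finset.sum_ite_eq' Finset.univ]
  simp

lemma sum_ge_succ {N : ℕ} (f : Fin N → ℝ) (n : ℕ) (hn' : n < N) (hn : n + 1 < N) :
    ∑ k, (if (⟨n, hn'⟩ : Fin N) ≤ k then f k else 0)
      = (∑ k, if (⟨n + 1, hn⟩ : Fin N) ≤ k then f k else 0) + f ⟨n, hn'⟩ := by
  have key : ∀ k : Fin N, (if (⟨n, hn'⟩ : Fin N) ≤ k then f k else 0)
      = (if (⟨n + 1, hn⟩ : Fin N) ≤ k then f k else 0) + (if k = ⟨n, hn'⟩ then f k else 0) := by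
    intro k
    simp only [Fin.le_def, Fin.ext_iff]
    split_ifs <;> (first | ring1 | (exfalso; omega))
  rw [Finset.sum_congr rfl (fun l _ => key l), Finset.sum_add_distrib,
    Finset.sum_ite_eq' Finset.univ]
  simp

lemma dd_split {N : ℕ} (ρ c : Fin N → ℝ) (j : Fin N) :
    dd ρ c j = (1 - ∑ k, if j ≤ k then ρ k else 0)
      + c j * ∑ k, if j ≤ k then ρ k / c k else 0 := by
  have key : ∀ k : Fin N, (if j ≤ k then ρ k * (1 - c j / c k) else 0)
      = (if j ≤ k then ρ k else 0) - c j * (if j ≤ k then ρ k / c k else 0) := by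
    intro k
    split_ifs <;> ring
  rw [dd, Finset.sum_congr rfl (fun l _ => key l), Finset.sum_sub_distrib, ← Finset.mul_sum]
  ring

lemma dd_pos {N : ℕ} (ρ c : Fin N → ℝ) (hρ : ∀ k, 0 ≤ ρ k) (hsum : ∑ k, ρ k < 1)
    (hc : ∀ k, 0 < c k) (j : Fin N) : 0 < dd ρ c j := by
  have h1 : (∑ k, if j ≤ k then ρ k * (1 - c j / c k) else 0) ≤ ∑ k, ρ k := by
    apply Finset.sum_le_sum
    intro k _
    split_ifs
    · have h2 : 0 ≤ c j / c k := div_nonneg (hc j).le (hc k).le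
      nlinarith [hρ k]
    · exact hρ k
  rw [dd]; linarith

lemma G_pos {N : ℕ} (ρ : Fin N → ℝ) (hρ : ∀ k, 0 ≤ ρ k) (hsum : ∑ k, ρ k < 1)
    (j : Fin N) : 0 < 1 - ∑ k, (if j ≤ k then ρ k else 0) := by
  have h1 : (∑ k, if j ≤ k then ρ k else 0) ≤ ∑ k, ρ k := by
    apply Finset.sum_le_sum
    intro k _
    split_ifs
    · exact le_refl _
    · exact hρ k
  linarith

lemma key {N : ℕ} (ρ c z r : Fin N → ℝ) (hρ : ∀ k, 0 < ρ k) (hsum : ∑ k, ρ k < 1)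
    (hc : ∀ k, 0 < c k) (hmc : Monotone c) (m : Fin N)
    (hrow : ∀ j : Fin N, j ≤ m →
      dd ρ c j * z j = c j * r j
        - c j * ∑ l, (if l < j then ρ l * (1 / c l - 1 / c j) * z l else 0))
    (hr0 : ∀ j : Fin N, j ≤ m → 0 ≤ r j)
    (hrm : ∀ j k : Fin N, j ≤ k → k ≤ m → r j ≤ r k) :
    ∀ j : Fin N, j ≤ m → 0 ≤ z j ∧ ∀ l : Fin N, l ≤ j → z l ≤ z j := by
  have hρ' : ∀ k, 0 ≤ ρ k := fun k => (hρ k).le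
  have hddpos : ∀ j, 0 < dd ρ c j := dd_pos ρ c hρ' hsum hc
  have hrowL : ∀ j : Fin N, j ≤ m →
      dd ρ c j * z j = c j * r j
        - (c j * (∑ l, if l < j then ρ l * z l / c l else 0)
            - ∑ l, (if l < j then ρ l * z l else 0)) := by
    intro j hj
    have conv : c j * (∑ l, if l < j then ρ l * (1 / c l - 1 / c j) * z l else 0)
        = c j * (∑ l, if l < j then ρ l * z l / c l else 0)
          - ∑ l, (if l < j then ρ l * z l else 0) := by
      rw [Finset.mul_sum, Finset.mul_sum, ← Finset.sum_sub_distrib]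
      apply Finset.sum_congr rfl
      intro l _
      split_ifs with h
      · have hcj := (hc j).ne'
        have hcl := (hc l).ne'
        field_simp
      · ring
    rw [hrow j hj, conv]
  suffices H : ∀ n : ℕ, ∀ hn : n < N, (⟨n, hn⟩ : Fin N) ≤ m →
      0 ≤ z ⟨n, hn⟩ ∧ ((∑ l, if l < (⟨n, hn⟩ : Fin N) then ρ l * z l else 0)
        ≤ (1 - ∑ k, if (⟨n, hn⟩ : Fin N) ≤ k then ρ k else 0) * z ⟨n, hn⟩)
        ∧ ∀ l : Fin N, l ≤ (⟨n, hn⟩ : Fin N) → z l ≤ z ⟨n, hn⟩ by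
    intro j hj
    obtain ⟨h1, h2, h3⟩ := H j.val j.isLt hj
    exact ⟨h1, h3⟩
  intro n
  induction n with
  | zero =>
    intro hn hm
    have hrow0 := hrowL ⟨0, hn⟩ hm
    have e1 : (∑ l, if l < (⟨0, hn⟩ : Fin N) then ρ l * z l / c l else 0) = 0 :=
      sum_lt_zero _ hn
    have e2 : (∑ l, if l < (⟨0, hn⟩ : Fin N) then ρ l * z l else 0) = 0 :=
      sum_lt_zero _ hn
    rw [e1, e2] at hrow0
    have hz : 0 ≤ z ⟨0, hn⟩ := by
      have h0 : 0 ≤ dd ρ c ⟨0, hn⟩ * z ⟨0, hn⟩ := by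
        rw [hrow0]
        have := hr0 ⟨0, hn⟩ hm
        have := hc ⟨0, hn⟩
        nlinarith
      nlinarith [hddpos ⟨0, hn⟩, h0]
    refine ⟨hz, ?_, ?_⟩
    · rw [e2]
      exact mul_nonneg (G_pos ρ hρ' hsum _).le hz
    · intro l hl
      have : l = ⟨0, hn⟩ := by
        apply Fin.ext
        have hv : (l : ℕ) ≤ 0 := hl
        show (l : ℕ) = 0
        omega
      rw [this]
  | succ n ih =>
    intro hn hm
    have hn' : n < N := by omega
    have hjj' : (⟨n, hn'⟩ : Fin N) ≤ ⟨n + 1, hn⟩ := Fin.mk_le_mk.mpr (Nat.le_succ n)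
    have hjm : (⟨n, hn'⟩ : Fin N) ≤ m := le_trans hjj' hm
    obtain ⟨hz0, hP, hmono⟩ := ih hn' hjm
    have hrj := hrowL ⟨n, hn'⟩ hjm
    have hrj' := hrowL ⟨n + 1, hn⟩ hm
    have hP' : (∑ l, if l < (⟨n + 1, hn⟩ : Fin N) then ρ l * z l else 0)
        = (∑ l, if l < (⟨n, hn'⟩ : Fin N) then ρ l * z l else 0)
          + ρ ⟨n, hn'⟩ * z ⟨n, hn'⟩ := sum_lt_succ _ n hn' hn
    have hL' : (∑ l, if l < (⟨n + 1, hn⟩ : Fin N) then ρ l * z l / c l else 0)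
        = (∑ l, if l < (⟨n, hn'⟩ : Fin N) then ρ l * z l / c l else 0)
          + ρ ⟨n, hn'⟩ * z ⟨n, hn'⟩ / c ⟨n, hn'⟩ := sum_lt_succ _ n hn' hn
    have hSg' : (∑ k, if (⟨n, hn'⟩ : Fin N) ≤ k then ρ k else 0)
        = (∑ k, if (⟨n + 1, hn⟩ : Fin N) ≤ k then ρ k else 0) + ρ ⟨n, hn'⟩ :=
      sum_ge_succ _ n hn' hn
    have hσ' : (∑ k, if (⟨n, hn'⟩ : Fin N) ≤ k then ρ k / c k else 0)
        = (∑ k, if (⟨n + 1, hn⟩ : Fin N) ≤ k then ρ k / c k else 0)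
          + ρ ⟨n, hn'⟩ / c ⟨n, hn'⟩ := sum_ge_succ _ n hn' hn
    have hcc : c ⟨n, hn'⟩ * (ρ ⟨n, hn'⟩ * z ⟨n, hn'⟩ / c ⟨n, hn'⟩)
        = ρ ⟨n, hn'⟩ * z ⟨n, hn'⟩ := by
      rw [mul_div_assoc']
      exact mul_div_cancel_left₀ _ (hc ⟨n, hn'⟩).ne'
    have hcσ : c ⟨n, hn'⟩ * (ρ ⟨n, hn'⟩ / c ⟨n, hn'⟩) = ρ ⟨n, hn'⟩ := by
      rw [mul_div_assoc']
      exact mul_div_cancel_left₀ _ (hc ⟨n, hn'⟩).ne'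
    have hdd1 := dd_split ρ c ⟨n, hn'⟩
    have hdd2 := dd_split ρ c ⟨n + 1, hn⟩
    have star : c ⟨n, hn'⟩ * dd ρ c ⟨n + 1, hn⟩ * (z ⟨n + 1, hn⟩ - z ⟨n, hn'⟩)
        = (c ⟨n + 1, hn⟩ - c ⟨n, hn'⟩)
            * ((1 - ∑ k, if (⟨n, hn'⟩ : Fin N) ≤ k then ρ k else 0) * z ⟨n, hn'⟩
                - ∑ l, if l < (⟨n, hn'⟩ : Fin N) then ρ l * z l else 0)
          + c ⟨n, hn'⟩ * c ⟨n + 1, hn⟩ * (r ⟨n + 1, hn⟩ - r ⟨n, hn'⟩) := by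
      linear_combination (c ⟨n, hn'⟩) * hrj' - (c ⟨n + 1, hn⟩) * hrj
        + (c ⟨n, hn'⟩) * hP' - (c ⟨n + 1, hn⟩ * c ⟨n, hn'⟩) * hL'
        - (c ⟨n + 1, hn⟩) * hcc
        + (c ⟨n + 1, hn⟩ * z ⟨n, hn'⟩) * hdd1 - (c ⟨n, hn'⟩ * z ⟨n, hn'⟩) * hdd2
        - (c ⟨n, hn'⟩ * z ⟨n, hn'⟩) * hSg'
        + (c ⟨n + 1, hn⟩ * c ⟨n, hn'⟩ * z ⟨n, hn'⟩) * hσ'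
        + (c ⟨n + 1, hn⟩ * z ⟨n, hn'⟩) * hcσ
    have hcj := hc ⟨n, hn'⟩
    have hcj' := hc ⟨n + 1, hn⟩
    have hcle : c ⟨n, hn'⟩ ≤ c ⟨n + 1, hn⟩ := hmc hjj'
    have hddp' := hddpos ⟨n + 1, hn⟩
    have hrmono : r ⟨n, hn'⟩ ≤ r ⟨n + 1, hn⟩ := hrm _ _ hjj' hm
    have hzz : z ⟨n, hn'⟩ ≤ z ⟨n + 1, hn⟩ := by
      have t1 : 0 ≤ (c ⟨n + 1, hn⟩ - c ⟨n, hn'⟩)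
          * ((1 - ∑ k, if (⟨n, hn'⟩ : Fin N) ≤ k then ρ k else 0) * z ⟨n, hn'⟩
              - ∑ l, if l < (⟨n, hn'⟩ : Fin N) then ρ l * z l else 0) :=
        mul_nonneg (by linarith) (by linarith)
      have t2 : 0 ≤ c ⟨n, hn'⟩ * c ⟨n + 1, hn⟩ * (r ⟨n + 1, hn⟩ - r ⟨n, hn'⟩) :=
        mul_nonneg (mul_pos hcj hcj').le (by linarith)
      have t3 : 0 < c ⟨n, hn'⟩ * dd ρ c ⟨n + 1, hn⟩ := mul_pos hcj hddp'
      have e : 0 ≤ z ⟨n + 1, hn⟩ - z ⟨n, hn'⟩ :=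
        (mul_nonneg_iff_of_pos_left t3).mp (by rw [star]; exact add_nonneg t1 t2)
      linarith
    have hG' : 0 < 1 - ∑ k, if (⟨n + 1, hn⟩ : Fin N) ≤ k then ρ k else 0 :=
      G_pos ρ hρ' hsum _
    refine ⟨le_trans hz0 hzz, ?_, ?_⟩
    · rw [hP']
      have s2 : (1 - ∑ k, if (⟨n, hn'⟩ : Fin N) ≤ k then ρ k else 0) * z ⟨n, hn'⟩
          + ρ ⟨n, hn'⟩ * z ⟨n, hn'⟩
          = (1 - ∑ k, if (⟨n + 1, hn⟩ : Fin N) ≤ k then ρ k else 0) * z ⟨n, hn'⟩ := by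
        linear_combination (-(z ⟨n, hn'⟩)) * hSg'
      have s3 : (1 - ∑ k, if (⟨n + 1, hn⟩ : Fin N) ≤ k then ρ k else 0) * z ⟨n, hn'⟩
          ≤ (1 - ∑ k, if (⟨n + 1, hn⟩ : Fin N) ≤ k then ρ k else 0) * z ⟨n + 1, hn⟩ :=
        mul_le_mul_of_nonneg_left hzz hG'.le
      linarith
    · intro l hl
      by_cases he : l = ⟨n + 1, hn⟩
      · rw [he]
      · have hlv : (l : ℕ) ≠ n + 1 := fun h => he (Fin.ext h)
        have hlj : l ≤ (⟨n, hn'⟩ : Fin N) := by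
          have hv : (l : ℕ) ≤ n + 1 := hl
          show (l : ℕ) ≤ n
          omega
        exact le_trans (hmono l hlj) hzz

lemma xrow {N : ℕ} (ρ c : Fin N → ℝ) (W0 : ℝ) (hc : ∀ k, 0 < c k) (j : Fin N)
    (hddne : dd ρ c j ≠ 0) :
    dd ρ c j * (c j * classW ρ c W0 j)
      = c j * (W0 / (1 - ∑ k, ρ k))
        - c j * ∑ l, (if l < j then ρ l * (1 / c l - 1 / c j) * (c l * classW ρ c W0 l) else 0) := by
  have hrow : dd ρ c j * classW ρ c W0 j = (W0 / (1 - ∑ k, ρ k))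
      - ∑ l, (if l < j then ρ l * (1 - c l / c j) * classW ρ c W0 l else 0) := by
    rw [classW_eq ρ c W0 j, mul_comm, div_mul_cancel₀ _ hddne]
  have conv : ∑ l, (if l < j then ρ l * (1 / c l - 1 / c j) * (c l * classW ρ c W0 l) else 0)
      = ∑ l, (if l < j then ρ l * (1 - c l / c j) * classW ρ c W0 l else 0) := by
    apply Finset.sum_congr rfl
    intro l _
    split_ifs with h
    · have hcl := (hc l).ne'
      have hcj := (hc j).ne'
      field_simp
    · rfl
  rw [conv]
  linear_combination (c j) * hrow

/-- Perturbing the `i`-th coordinate of a strictly ordered positive bid profile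
within the interval `(b_{i-1}, b_{i+1})` (with `b_0 := 0`, `b_{N+1} := ∞`),
the class waiting time `W_i`, recomputed from the perturbed profile, is
monotone decreasing in the perturbed bid. Membership of `s ≤ t` in the interval
is expressed by `0 < s`, `b j < s` for all `j < i`, and `t < b j` for all
`j > i`. -/
theorem classW_antitone_in_own_bid (N : ℕ) (hN : 1 ≤ N)
    (ρ b : Fin N → ℝ) (W0 : ℝ) (i : Fin N)
    (hρ : ∀ k, 0 < ρ k) (hρsum : ∑ k, ρ k < 1) (hW0 : 0 < W0)
    (hbpos : ∀ k, 0 < b k) (hbmono : StrictMono b) :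
    ∀ s t : ℝ, 0 < s → (∀ j : Fin N, j < i → b j < s) →
      (∀ j : Fin N, i < j → t < b j) → s ≤ t →
      classW ρ (Function.update b i t) W0 i ≤
        classW ρ (Function.update b i s) W0 i := by
  intro s t hs hlow hupp hst
  have ht : 0 < t := lt_of_lt_of_le hs hst
  set cs := Function.update b i s with hcs_def
  set ct := Function.update b i t with hct_def
  have hρ' : ∀ k, 0 ≤ ρ k := fun k => (hρ k).le
  have hA : 0 < W0 / (1 - ∑ k, ρ k) := div_pos hW0 (by linarith)
  have hcs_apply : ∀ k, k ≠ i → cs k = b k := fun k hk => Function.update_of_ne hk _ _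
  have hct_apply : ∀ k, k ≠ i → ct k = b k := fun k hk => Function.update_of_ne hk _ _
  have hcs_i : cs i = s := Function.update_self _ _ _
  have hct_i : ct i = t := Function.update_self _ _ _
  have hcs_pos : ∀ k, 0 < cs k := by
    intro k
    by_cases hk : k = i
    · subst hk; rw [hcs_i]; exact hs
    · rw [hcs_apply k hk]; exact hbpos k
  have hct_pos : ∀ k, 0 < ct k := by
    intro k
    by_cases hk : k = i
    · subst hk; rw [hct_i]; exact ht
    · rw [hct_apply k hk]; exact hbpos k
  have hcs_mono : StrictMono cs := by
    intro a b' hab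
    by_cases ha : a = i
    · subst ha
      rw [hcs_i, hcs_apply b' hab.ne']
      exact lt_of_le_of_lt hst (hupp b' hab)
    · by_cases hb : b' = i
      · subst hb
        rw [hcs_i, hcs_apply a ha]
        exact hlow a hab
      · rw [hcs_apply a ha, hcs_apply b' hb]
        exact hbmono hab
  have hct_mono : StrictMono ct := by
    intro a b' hab
    by_cases ha : a = i
    · subst ha
      rw [hct_i, hct_apply b' hab.ne']
      exact hupp b' hab
    · by_cases hb : b' = i
      · subst hb
        rw [hct_i, hct_apply a ha]
        exact lt_of_lt_of_le (hlow a hab) hst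
      · rw [hct_apply a ha, hct_apply b' hb]
        exact hbmono hab
  have hEps : 0 ≤ 1 / s - 1 / t := by
    have := one_div_le_one_div_of_le hs hst
    linarith
  have hNsub : N - 1 < N := by omega
  have hallle : ∀ j : Fin N, j ≤ (⟨N - 1, hNsub⟩ : Fin N) := by
    intro j
    show (j : ℕ) ≤ N - 1
    have := j.isLt
    omega
  have K1 := key ρ cs (fun j => cs j * classW ρ cs W0 j) (fun _ => W0 / (1 - ∑ k, ρ k))
    hρ hρsum hcs_pos hcs_mono.monotone ⟨N - 1, hNsub⟩
    (fun j _ => xrow ρ cs W0 hcs_pos j (dd_pos ρ cs hρ' hρsum hcs_pos j).ne')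
    (fun j _ => hA.le) (fun j k _ _ => le_refl _)
  have K2 := key ρ ct (fun j => ct j * classW ρ ct W0 j) (fun _ => W0 / (1 - ∑ k, ρ k))
    hρ hρsum hct_pos hct_mono.monotone ⟨N - 1, hNsub⟩
    (fun j _ => xrow ρ ct W0 hct_pos j (dd_pos ρ ct hρ' hρsum hct_pos j).ne')
    (fun j _ => hA.le) (fun j k _ _ => le_refl _)
  have hWs_nonneg : ∀ j, 0 ≤ classW ρ cs W0 j := by
    intro j
    have h1 := (K1 j (hallle j)).1
    exact (mul_nonneg_iff_of_pos_left (hcs_pos j)).mp h1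
  have hWt_nonneg : ∀ j, 0 ≤ classW ρ ct W0 j := by
    intro j
    have h1 := (K2 j (hallle j)).1
    exact (mul_nonneg_iff_of_pos_left (hct_pos j)).mp h1
  have hxs_mono : ∀ j k : Fin N, j ≤ k →
      cs j * classW ρ cs W0 j ≤ cs k * classW ρ cs W0 k :=
    fun j k hjk => (K1 k (hallle k)).2 j hjk
  -- monotonicity of lower classes in the perturbed bid
  have hlemono : ∀ l : Fin N, l < i → classW ρ cs W0 l ≤ classW ρ ct W0 l := by
    intro l hl
    have hi0 : 0 < (i : ℕ) := lt_of_le_of_lt (Nat.zero_le _) hl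
    have him : (i : ℕ) - 1 < N := by have := i.isLt; omega
    have hrow3 : ∀ j : Fin N, j ≤ (⟨(i : ℕ) - 1, him⟩ : Fin N) →
        dd ρ ct j * (ct j * (classW ρ ct W0 j - classW ρ cs W0 j))
          = ct j * (ρ i * (1 / s - 1 / t) * (cs j * classW ρ cs W0 j))
            - ct j * ∑ l', (if l' < j then
                ρ l' * (1 / ct l' - 1 / ct j)
                  * (ct l' * (classW ρ ct W0 l' - classW ρ cs W0 l')) else 0) := by
      intro j hj
      have hji : (j : ℕ) < (i : ℕ) := by
        have hv : (j : ℕ) ≤ (i : ℕ) - 1 := hj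
        omega
      have hjile : j ≤ i := by show (j : ℕ) ≤ (i : ℕ); omega
      have hjne : j ≠ i := by
        intro h
        rw [h] at hji
        omega
      have hctj : ct j = b j := hct_apply j hjne
      have hcsj : cs j = b j := hcs_apply j hjne
      have hcsj' : cs j = ct j := by rw [hcsj, hctj]
      have hr_ct := xrow ρ ct W0 hct_pos j (dd_pos ρ ct hρ' hρsum hct_pos j).ne'
      have hr_cs := xrow ρ cs W0 hcs_pos j (dd_pos ρ cs hρ' hρsum hcs_pos j).ne'
      have hconv : ∑ l', (if l' < j then
            ρ l' * (1 / cs l' - 1 / cs j) * (cs l' * classW ρ cs W0 l') else 0)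
          = ∑ l', (if l' < j then
            ρ l' * (1 / ct l' - 1 / ct j) * (ct l' * classW ρ cs W0 l') else 0) := by
        apply Finset.sum_congr rfl
        intro l' _
        split_ifs with h
        · have hl'i : l' ≠ i := by
            intro he
            rw [he] at h
            have : (i : ℕ) < (j : ℕ) := h
            omega
          rw [hcs_apply l' hl'i, hct_apply l' hl'i, hcsj, hctj]
        · rfl
      have hsplit : ∑ l', (if l' < j then
            ρ l' * (1 / ct l' - 1 / ct j)
              * (ct l' * (classW ρ ct W0 l' - classW ρ cs W0 l')) else 0)
          = (∑ l', if l' < j then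
              ρ l' * (1 / ct l' - 1 / ct j) * (ct l' * classW ρ ct W0 l') else 0)
            - ∑ l', (if l' < j then
              ρ l' * (1 / ct l' - 1 / ct j) * (ct l' * classW ρ cs W0 l') else 0) := by
        rw [← Finset.sum_sub_distrib]
        apply Finset.sum_congr rfl
        intro l' _
        split_ifs with h
        · ring
        · ring
      have hddd : dd ρ cs j = dd ρ ct j + ρ i * ct j * (1 / s - 1 / t) := by
        have hterm : ∑ k, ((if j ≤ k then ρ k * (1 - ct j / ct k) else 0)
            - (if j ≤ k then ρ k * (1 - cs j / cs k) else 0))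
              = ρ i * ct j * (1 / s - 1 / t) := by
          rw [Fintype.sum_eq_single i]
          · rw [if_pos hjile, if_pos hjile, hct_i, hcs_i, hctj, hcsj]
            ring
          · intro k hk
            rw [hcs_apply k hk, hct_apply k hk, hcsj, hctj]
            ring
        rw [Finset.sum_sub_distrib] at hterm
        rw [dd, dd]
        linarith [hterm]
      linear_combination hr_ct - hr_cs + (ct j) * hconv + (ct j) * hsplit
        + (ct j * classW ρ cs W0 j) * hddd
        + (dd ρ cs j * classW ρ cs W0 j - W0 / (1 - ∑ k, ρ k)
            + (∑ l', if l' < j then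
                ρ l' * (1 / cs l' - 1 / cs j) * (cs l' * classW ρ cs W0 l') else 0)
            - ρ i * (1 / s - 1 / t) * ct j * classW ρ cs W0 j) * hcsj'
    have K3 := key ρ ct (fun j => ct j * (classW ρ ct W0 j - classW ρ cs W0 j))
      (fun j => ρ i * (1 / s - 1 / t) * (cs j * classW ρ cs W0 j))
      hρ hρsum hct_pos hct_mono.monotone ⟨(i : ℕ) - 1, him⟩ hrow3
      (fun j _ => mul_nonneg (mul_nonneg (hρ i).le hEps) ((K1 j (hallle j)).1))
      (fun j k hjk _ => mul_le_mul_of_nonneg_left (hxs_mono j k hjk)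
        (mul_nonneg (hρ i).le hEps))
    have hlm : l ≤ (⟨(i : ℕ) - 1, him⟩ : Fin N) := by
      show (l : ℕ) ≤ (i : ℕ) - 1
      have : (l : ℕ) < (i : ℕ) := hl
      omega
    have h1 := (K3 l hlm).1
    have h2 := (mul_nonneg_iff_of_pos_left (hct_pos l)).mp h1
    linarith
  -- final comparison
  have hddcs_pos := dd_pos ρ cs hρ' hρsum hcs_pos i
  have hddct_pos := dd_pos ρ ct hρ' hρsum hct_pos i
  have hdd_le : dd ρ cs i ≤ dd ρ ct i := by
    rw [dd, dd]
    apply sub_le_sub_left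
    apply Finset.sum_le_sum
    intro k _
    split_ifs with h
    · by_cases hk : k = i
      · subst hk
        rw [hct_i, hcs_i, div_self ht.ne', div_self hs.ne']
      · rw [hcs_apply k hk, hct_apply k hk, hct_i, hcs_i]
        have h1 : s / b k ≤ t / b k := (div_le_div_iff_of_pos_right (hbpos k)).mpr hst
        have := hρ' k
        nlinarith
    · exact le_refl _
  have hterm : (∑ k, if k < i then ρ k * (1 - cs k / cs i) * classW ρ cs W0 k else 0)
      ≤ ∑ k, (if k < i then ρ k * (1 - ct k / ct i) * classW ρ ct W0 k else 0) := by
    apply Finset.sum_le_sum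
    intro k _
    split_ifs with h
    · have hki : k ≠ i := by
        intro he
        rw [he] at h
        exact lt_irrefl _ h
      rw [hcs_apply k hki, hct_apply k hki, hcs_i, hct_i]
      have h1 : 0 ≤ 1 - b k / s := by
        have h2 : b k / s ≤ 1 := (div_le_one hs).mpr (le_of_lt (hlow k h))
        linarith
      have h2 : 1 - b k / s ≤ 1 - b k / t := by
        have : b k / t ≤ b k / s := div_le_div_of_nonneg_left (hbpos k).le hs hst
        linarith
      have h3 : classW ρ cs W0 k ≤ classW ρ ct W0 k := hlemono k h
      have h4 := hWs_nonneg k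
      have h5 := mul_le_mul h2 h3 h4 (by linarith)
      rw [mul_assoc, mul_assoc]
      exact mul_le_mul_of_nonneg_left h5 (hρ' k)
    · exact le_refl _
  have hNum'_nonneg : 0 ≤ W0 / (1 - ∑ k, ρ k)
      - ∑ k, (if k < i then ρ k * (1 - ct k / ct i) * classW ρ ct W0 k else 0) := by
    have e : dd ρ ct i * classW ρ ct W0 i = W0 / (1 - ∑ k, ρ k)
        - ∑ k, (if k < i then ρ k * (1 - ct k / ct i) * classW ρ ct W0 k else 0) := by
      rw [classW_eq ρ ct W0 i, mul_comm, div_mul_cancel₀ _ hddct_pos.ne']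
    have := mul_nonneg hddct_pos.le (hWt_nonneg i)
    linarith [e ▸ this]
  rw [classW_eq ρ ct W0 i, classW_eq ρ cs W0 i]
  calc (W0 / (1 - ∑ k, ρ k)
      - ∑ k, (if k < i then ρ k * (1 - ct k / ct i) * classW ρ ct W0 k else 0)) / dd ρ ct i
      ≤ (W0 / (1 - ∑ k, ρ k)
        - ∑ k, (if k < i then ρ k * (1 - ct k / ct i) * classW ρ ct W0 k else 0)) / dd ρ cs i := by
        rw [div_eq_mul_inv, div_eq_mul_inv]
        exact mul_le_mul_of_nonneg_left (inv_anti₀ hddcs_pos hdd_le) hNum'_nonneg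
    _ ≤ (W0 / (1 - ∑ k, ρ k)
        - ∑ k, (if k < i then ρ k * (1 - cs k / cs i) * classW ρ cs W0 k else 0)) / dd ρ cs i := by
        apply (div_le_div_iff_of_pos_right hddcs_pos).mpr
        linarith [hterm]
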